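/- Minimum posterior standard deviation under a Matérn-type information-gain bound: assume k(x, x) ≤ 1 for all x ∈ X and that the Matérn-type information-gain hypothesis holds. Then for every integer T ≥ T̄_Mat and every sequence x₁, …, x_T ∈ X, min_{t ∈ {1, …, T}} σ(x_t; X_{t−1}) ≤ C̃_Mat^{1/2} · T^{−ν/d} · (ln T)^{ν/d}; moreover min_{t ∈ {1, …, T}} σ(x_t; X_{t−1}) ≤ 1 for every T ∈ ℕ₊. -/

import Mathlib

open Matrix

noncomputable section

/-- Gram matrix `K = [k(x_i, x_j)]` of the kernel `k` on the finite family `xs`. -/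
def gram {X ι : Type*} [Fintype ι] (k : X → X → ℝ) (xs : ι → X) :
    Matrix ι ι ℝ := fun i j => k (xs i) (xs j)

/-- Kernel vector `k_t(x) = (k(x₁, x), …, k(x_t, x))`. -/
def kvec {X ι : Type*} [Fintype ι] (k : X → X → ℝ) (xs : ι → X) (x : X) :
    ι → ℝ := fun i => k (xs i) x

/-- Regularized posterior variance `σ²_{λ²}(x; xs) = k(x,x) - k_t(x)ᵀ (K + λ² I)⁻¹ k_t(x)`.
For the empty family this is `k(x,x)`. -/
def postVar {X ι : Type*} [Fintype ι] [DecidableEq ι] (k : X → X → ℝ)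
    (xs : ι → X) (lam : ℝ) (x : X) : ℝ :=
  k x x - kvec k xs x ⬝ᵥ ((gram k xs + lam ^ 2 • (1 : Matrix ι ι ℝ))⁻¹ *ᵥ kvec k xs x)

/-- Noise-free posterior standard deviation `σ(x; xs) = inf_{λ > 0} σ_{λ²}(x; xs)`. -/
def postStd {X ι : Type*} [Fintype ι] [DecidableEq ι] (k : X → X → ℝ)
    (xs : ι → X) (x : X) : ℝ :=
  ⨅ lam : {l : ℝ // 0 < l}, Real.sqrt (postVar k xs lam.1 x)

/-- Maximum information gain `γ_T(λ²) = sup_{x₁,…,x_T} (1/2) ln det (I_T + λ⁻² K_T)`,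
a value in `[0, ∞]`. -/
def mig {X : Type*} (k : X → X → ℝ) (T : ℕ) (lam : ℝ) : ENNReal :=
  ⨆ xs : Fin T → X, ENNReal.ofReal
    ((1 / 2) * Real.log ((1 + (lam ^ 2)⁻¹ • gram k xs).det))

/-- The prefix `X_{t-1} = (x₁, …, x_{t-1})` of a finite sequence (`t` is 0-indexed). -/
def pre {X : Type*} {T : ℕ} (xs : Fin T → X) (t : Fin T) : Fin t.1 → X :=
  fun i => xs ⟨i.1, i.2.trans t.2⟩

/-- Noise-free posterior mean `μ(x; xs) = k_t(x)ᵀ K⁻¹ (f(x₁), …, f(x_t))ᵀ`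
(for the empty family this is `0`). -/
def postMean {X ι : Type*} [Fintype ι] [DecidableEq ι] (k : X → X → ℝ)
    (xs : ι → X) (f : X → ℝ) (x : X) : ℝ :=
  kvec k xs x ⬝ᵥ ((gram k xs)⁻¹ *ᵥ fun i => f (xs i))

/-- Noise-free posterior standard deviation in closed form,
`σ(x; xs) = (k(x,x) - k_t(x)ᵀ K⁻¹ k_t(x))^{1/2}` (for the empty family, `k(x,x)^{1/2}`). -/
def postStdInv {X ι : Type*} [Fintype ι] [DecidableEq ι] (k : X → X → ℝ)
    (xs : ι → X) (x : X) : ℝ :=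
  Real.sqrt (k x x - kvec k xs x ⬝ᵥ ((gram k xs)⁻¹ *ᵥ kvec k xs x))

/-- The first `t` points `X_t = (x₁, …, x_t)` of an infinite sequence. -/
def prefN {X : Type*} (xseq : ℕ → X) (t : ℕ) : Fin t → X := fun i => xseq i

section aux

variable {X : Type*} {k : X → X → ℝ}

lemma gram_psd (hsym : ∀ x y : X, k x y = k y x)
    (hpsd : ∀ (n : ℕ) (xv : Fin n → X) (c : Fin n → ℝ),
      0 ≤ ∑ i, ∑ j, c i * c j * k (xv i) (xv j))
    {n : ℕ} (xs : Fin n → X) : (gram k xs).PosSemidef := by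
  rw [Matrix.posSemidef_iff_dotProduct_mulVec]
  constructor
  · ext i j
    simp [Matrix.conjTranspose_apply, _root_.gram, hsym (xs i) (xs j)]
  · intro x
    have h := hpsd n xs x
    have : star x ⬝ᵥ (gram k xs) *ᵥ x = ∑ i, ∑ j, x i * x j * k (xs i) (xs j) := by
      simp only [dotProduct, mulVec, _root_.gram, Finset.mul_sum, Pi.star_apply, star_trivial]
      exact Finset.sum_congr rfl fun i _ => Finset.sum_congr rfl fun j _ => by ring
    rw [this]; exact h

lemma reg_posDef (hsym : ∀ x y : X, k x y = k y x)
    (hpsd : ∀ (n : ℕ) (xv : Fin n → X) (c : Fin n → ℝ),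
      0 ≤ ∑ i, ∑ j, c i * c j * k (xv i) (xv j))
    {n : ℕ} (xs : Fin n → X) {lam : ℝ} (hlam : lam ≠ 0) :
    (gram k xs + lam ^ 2 • (1 : Matrix (Fin n) (Fin n) ℝ)).PosDef := by
  refine Matrix.PosDef.posSemidef_add (gram_psd hsym hpsd xs) ?_
  rw [Matrix.smul_one_eq_diagonal]
  exact Matrix.PosDef.diagonal (fun i => by positivity)

lemma quad_inv_nonneg (hsym : ∀ x y : X, k x y = k y x)
    (hpsd : ∀ (n : ℕ) (xv : Fin n → X) (c : Fin n → ℝ),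
      0 ≤ ∑ i, ∑ j, c i * c j * k (xv i) (xv j))
    {n : ℕ} (xs : Fin n → X) {lam : ℝ} (hlam : lam ≠ 0) (x : X) :
    0 ≤ kvec k xs x ⬝ᵥ ((gram k xs + lam ^ 2 • (1 : Matrix (Fin n) (Fin n) ℝ))⁻¹ *ᵥ kvec k xs x) := by
  have h := ((reg_posDef hsym hpsd xs hlam).inv).posSemidef.dotProduct_mulVec_nonneg (kvec k xs x)
  simpa using h

lemma postVar_le_diag (hsym : ∀ x y : X, k x y = k y x)
    (hpsd : ∀ (n : ℕ) (xv : Fin n → X) (c : Fin n → ℝ),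
      0 ≤ ∑ i, ∑ j, c i * c j * k (xv i) (xv j))
    {n : ℕ} (xs : Fin n → X) {lam : ℝ} (hlam : lam ≠ 0) (x : X) :
    postVar k xs lam x ≤ k x x := by
  have := quad_inv_nonneg hsym hpsd xs hlam x
  unfold postVar
  linarith

end aux

section detstep

lemma det_step {X : Type*} {k : X → X → ℝ}
    (hsym : ∀ x y : X, k x y = k y x)
    (hpsd : ∀ (n : ℕ) (xv : Fin n → X) (c : Fin n → ℝ),
      0 ≤ ∑ i, ∑ j, c i * c j * k (xv i) (xv j))
    {n : ℕ} (xs : Fin (n+1) → X) {lam : ℝ} (hlam : lam ≠ 0) :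
    (gram k xs + lam ^ 2 • (1 : Matrix (Fin (n+1)) (Fin (n+1)) ℝ)).det =
      (gram k (xs ∘ Fin.castSucc) + lam ^ 2 • (1 : Matrix (Fin n) (Fin n) ℝ)).det *
        (lam ^ 2 + postVar k (xs ∘ Fin.castSucc) lam (xs (Fin.last n))) := by
  set ys : Fin n → X := xs ∘ Fin.castSucc with hys
  set z : X := xs (Fin.last n) with hz
  set A : Matrix (Fin n) (Fin n) ℝ := gram k ys + lam ^ 2 • (1 : Matrix (Fin n) (Fin n) ℝ) with hA
  have hApd : A.PosDef := reg_posDef hsym hpsd ys hlam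
  haveI : Invertible A := A.invertibleOfIsUnitDet (isUnit_iff_ne_zero.mpr hApd.det_pos.ne')
  set v : Fin n → ℝ := kvec k ys z with hv
  set B : Matrix (Fin n) (Fin 1) ℝ := Matrix.of fun i _ => v i with hB
  set C : Matrix (Fin 1) (Fin n) ℝ := Matrix.of fun _ j => v j with hC
  set D : Matrix (Fin 1) (Fin 1) ℝ := Matrix.of fun _ _ => k z z + lam ^ 2 with hD
  set M : Matrix (Fin (n+1)) (Fin (n+1)) ℝ :=
    gram k xs + lam ^ 2 • (1 : Matrix (Fin (n+1)) (Fin (n+1)) ℝ) with hM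
  have hlast : ∀ j : Fin 1, Fin.natAdd n j = Fin.last n := by
    intro j
    rw [Subsingleton.elim j (0 : Fin 1)]
    ext; simp
  have key : M.submatrix finSumFinEquiv finSumFinEquiv = Matrix.fromBlocks A B C D := by
    ext i j
    rcases i with i | i <;> rcases j with j | j <;>
      simp only [Matrix.submatrix_apply, finSumFinEquiv_apply_left, finSumFinEquiv_apply_right,
        Matrix.fromBlocks_apply₁₁, Matrix.fromBlocks_apply₁₂, Matrix.fromBlocks_apply₂₁,
        Matrix.fromBlocks_apply₂₂, hM, Matrix.add_apply, Matrix.smul_apply, Matrix.one_apply,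
        _root_.gram, hlast, Matrix.of_apply, hA, hB, hC, hD, hv, kvec, hys, Function.comp_apply, hz,
        smul_eq_mul]
    · congr 2
      exact if_congr ⟨fun h => Fin.castAdd_injective _ _ h, fun h => h ▸ rfl⟩ rfl rfl
    · rw [if_neg (fun h => absurd (congrArg Fin.val h) (by simpa using i.2.ne))]
      norm_num
      rfl
    · rw [if_neg (fun h => absurd (congrArg Fin.val h) (by simpa using j.2.ne.symm))]
      rw [hsym]
      norm_num
      rfl
    · simp
  have hquad : (C * A⁻¹ * B) 0 0 = v ⬝ᵥ A⁻¹ *ᵥ v := by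
    simp only [Matrix.mul_apply, dotProduct, Matrix.mulVec, hB, hC, Matrix.of_apply,
      Finset.sum_mul, Finset.mul_sum]
    rw [Finset.sum_comm]
    exact Finset.sum_congr rfl fun i _ => Finset.sum_congr rfl fun j _ => by ring
  calc M.det = (M.submatrix finSumFinEquiv finSumFinEquiv).det :=
        (Matrix.det_submatrix_equiv_self _ _).symm
    _ = (Matrix.fromBlocks A B C D).det := by rw [key]
    _ = A.det * (D - C * ⅟A * B).det := Matrix.det_fromBlocks₁₁ A B C D
    _ = A.det * (lam ^ 2 + postVar k ys lam z) := by
        rw [Matrix.invOf_eq_nonsing_inv, Matrix.det_fin_one]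
        simp only [Matrix.sub_apply, hquad, hD, Matrix.of_apply, postVar]
        ring_nf
        rfl

end detstep

section prod

variable {X : Type*} {k : X → X → ℝ}

lemma postVar_add_pos (hsym : ∀ x y : X, k x y = k y x)
    (hpsd : ∀ (n : ℕ) (xv : Fin n → X) (c : Fin n → ℝ),
      0 ≤ ∑ i, ∑ j, c i * c j * k (xv i) (xv j))
    {n : ℕ} (ys : Fin n → X) {lam : ℝ} (hlam : lam ≠ 0) (x : X) :
    0 < lam ^ 2 + postVar k ys lam x := by
  set xs : Fin (n+1) → X := Fin.snoc ys x with hxs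
  have hc : xs ∘ Fin.castSucc = ys := funext fun i => by simp [hxs]
  have hl : xs (Fin.last n) = x := Fin.snoc_last _ _
  have hds := det_step hsym hpsd xs hlam
  rw [hc, hl] at hds
  have hMpos := (reg_posDef hsym hpsd xs hlam).det_pos
  have hApos := (reg_posDef hsym hpsd ys hlam).det_pos
  rw [hds] at hMpos
  rcases mul_pos_iff.mp hMpos with ⟨_, h⟩ | ⟨h, _⟩
  · exact h
  · linarith

lemma det_prod (hsym : ∀ x y : X, k x y = k y x)
    (hpsd : ∀ (n : ℕ) (xv : Fin n → X) (c : Fin n → ℝ),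
      0 ≤ ∑ i, ∑ j, c i * c j * k (xv i) (xv j))
    {lam : ℝ} (hlam : lam ≠ 0) :
    ∀ (n : ℕ) (xs : Fin n → X),
      (gram k xs + lam ^ 2 • (1 : Matrix (Fin n) (Fin n) ℝ)).det =
        ∏ t : Fin n, (lam ^ 2 + postVar k (pre xs t) lam (xs t)) := by
  intro n
  induction n with
  | zero => intro xs; simp [Matrix.det_isEmpty]
  | succ n IH =>
    intro xs
    rw [Fin.prod_univ_castSucc, det_step hsym hpsd xs hlam, IH (xs ∘ Fin.castSucc)]
    congr 1

end prod

lemma scalar_bound (CMat ν : ℝ) (d : ℕ) (hd : 1 ≤ d) (hCMat : 0 < CMat) (hν : 0 < ν)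
    (Ctil : ℝ) (hCtil1 : 1 ≤ Ctil)
    (hCtil2 : (2 + 2 * ν / (d : ℝ)) ^ (2 * ν / (d : ℝ)) * (6 * CMat) ^ (1 + 2 * ν / (d : ℝ)) ≤ Ctil)
    (T : ℕ) (hT : 4 ≤ T) (lamsq : ℝ)
    (hlamsq : lamsq = Ctil * (T : ℝ) ^ (-(2 * ν / (d : ℝ))) * Real.log (T : ℝ) ^ (2 * ν / (d : ℝ)))
    (hle1 : lamsq ≤ 1) :
    CMat * ((T : ℝ) / lamsq) ^ ((d : ℝ) / (2 * ν + (d : ℝ))) *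
      Real.log ((T : ℝ) / lamsq) ^ (2 * ν / (2 * ν + (d : ℝ))) ≤ (T : ℝ) / 6 := by
  set a : ℝ := (T : ℝ) with ha
  set L : ℝ := Real.log a with hL
  set β : ℝ := 2 * ν / (d : ℝ) with hβ
  set α : ℝ := (d : ℝ) / (2 * ν + (d : ℝ)) with hα
  set γ : ℝ := 2 * ν / (2 * ν + (d : ℝ)) with hγ
  have hdpos : (0 : ℝ) < (d : ℝ) := by exact_mod_cast Nat.lt_of_lt_of_le Nat.zero_lt_one hd
  have hβpos : 0 < β := by positivity
  have hαpos : 0 < α := by positivity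
  have hγpos : 0 < γ := by positivity
  have hαβ : (1 + β) * α = 1 := by rw [hα, hβ]; field_simp; ring
  have hγβα : γ = β * α := by rw [hγ, hβ, hα]; field_simp
  have ha4 : (4 : ℝ) ≤ a := by rw [ha]; exact_mod_cast hT
  have hapos : 0 < a := by linarith
  have ha1 : 1 < a := by linarith
  have hL1 : 1 ≤ L := by
    rw [hL, Real.le_log_iff_exp_le hapos]
    have := Real.exp_one_lt_d9
    linarith
  have hLpos : 0 < L := by linarith
  have hlamsq_pos : 0 < lamsq := by
    have hC0 : (0:ℝ) < Ctil := by linarith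
    rw [hlamsq]
    positivity
  have haβpos : 0 < a ^ (-β) := Real.rpow_pos_of_pos hapos _
  have hml : a ^ (-β) ≤ lamsq := by
    rw [hlamsq]
    have hLβ : 1 ≤ L ^ β := Real.one_le_rpow hL1 hβpos.le
    have h1 : 1 * a ^ (-β) ≤ Ctil * a ^ (-β) :=
      mul_le_mul_of_nonneg_right hCtil1 haβpos.le
    have h2 : (1 * a ^ (-β)) * 1 ≤ (Ctil * a ^ (-β)) * L ^ β :=
      mul_le_mul h1 hLβ zero_le_one (by nlinarith)
    nlinarith
  have hdivpos : 0 < a / lamsq := by positivity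
  have hsum : a ^ (1 + β) * a ^ (-β) = a := by
    rw [← Real.rpow_add hapos]; norm_num
  have hdiv_le : a / lamsq ≤ a ^ (1 + β) := by
    rw [div_le_iff₀ hlamsq_pos]
    have h1 : a ^ (1 + β) * a ^ (-β) ≤ a ^ (1 + β) * lamsq :=
      mul_le_mul_of_nonneg_left hml (Real.rpow_pos_of_pos hapos _).le
    linarith [hsum ▸ h1]
  have hdiv_ge : a ≤ a / lamsq := by
    rw [le_div_iff₀ hlamsq_pos]
    nlinarith
  have hlog_le : Real.log (a / lamsq) ≤ (1 + β) * L := by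
    calc Real.log (a / lamsq) ≤ Real.log (a ^ (1 + β)) :=
          Real.log_le_log hdivpos hdiv_le
      _ = (1 + β) * L := Real.log_rpow hapos _
  have hlogpos : 0 < Real.log (a / lamsq) := Real.log_pos (lt_of_lt_of_le ha1 hdiv_ge)
  -- rewrite (a / lamsq) ^ α
  have hLβpos : 0 < L ^ β := Real.rpow_pos_of_pos hLpos _
  have h1 : a / lamsq = a ^ (1 + β) / (Ctil * L ^ β) := by
    rw [hlamsq, Real.rpow_neg hapos.le, Real.rpow_add hapos, Real.rpow_one]
    have haβpos' : 0 < a ^ β := Real.rpow_pos_of_pos hapos _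
    field_simp
  have hexp : (a / lamsq) ^ α = a / (Ctil ^ α * L ^ γ) := by
    rw [h1, Real.div_rpow (Real.rpow_pos_of_pos hapos _).le (by positivity),
      ← Real.rpow_mul hapos.le, hαβ, Real.rpow_one,
      Real.mul_rpow (by linarith) hLβpos.le, ← Real.rpow_mul hLpos.le, ← hγβα]
  -- main chain
  have hCαpos : 0 < Ctil ^ α := Real.rpow_pos_of_pos (by linarith) _
  have hLγpos : 0 < L ^ γ := Real.rpow_pos_of_pos hLpos _
  have step1 : CMat * (a / lamsq) ^ α * Real.log (a / lamsq) ^ γ ≤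
      CMat * (a / lamsq) ^ α * ((1 + β) * L) ^ γ := by
    refine mul_le_mul_of_nonneg_left ?_ (by positivity)
    exact Real.rpow_le_rpow hlogpos.le hlog_le hγpos.le
  have step2 : CMat * (a / lamsq) ^ α * ((1 + β) * L) ^ γ =
      CMat * (1 + β) ^ γ * a / Ctil ^ α := by
    rw [hexp, Real.mul_rpow (by linarith) hLpos.le]
    field_simp
  have hCα_ge : (2 + β) ^ γ * (6 * CMat) ≤ Ctil ^ α := by
    have h2 : ((2 + β) ^ β * (6 * CMat) ^ (1 + β)) ^ α ≤ Ctil ^ α :=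
      Real.rpow_le_rpow (by positivity) hCtil2 hαpos.le
    calc (2 + β) ^ γ * (6 * CMat) =
          ((2 + β) ^ β * (6 * CMat) ^ (1 + β)) ^ α := by
            rw [Real.mul_rpow (by positivity) (by positivity),
              ← Real.rpow_mul (by positivity), ← Real.rpow_mul (by positivity),
              ← hγβα, hαβ, Real.rpow_one]
      _ ≤ Ctil ^ α := h2
  have step3 : CMat * (1 + β) ^ γ * a / Ctil ^ α ≤
      CMat * (1 + β) ^ γ * a / ((2 + β) ^ γ * (6 * CMat)) := by
    apply div_le_div_of_nonneg_left (by positivity) (by positivity) hCα_ge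
  have step4 : CMat * (1 + β) ^ γ * a / ((2 + β) ^ γ * (6 * CMat)) ≤ a / 6 := by
    have hratio : (1 + β) ^ γ ≤ (2 + β) ^ γ :=
      Real.rpow_le_rpow (by positivity) (by linarith) hγpos.le
    rw [div_le_div_iff₀ (by positivity) (by norm_num)]
    calc CMat * (1 + β) ^ γ * a * 6 = 6 * CMat * a * ((1 + β) ^ γ) := by ring
      _ ≤ 6 * CMat * a * ((2 + β) ^ γ) := mul_le_mul_of_nonneg_left hratio (by positivity)
      _ = a * ((2 + β) ^ γ * (6 * CMat)) := by ring
  calc CMat * (a / lamsq) ^ α * Real.log (a / lamsq) ^ γ ≤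
        CMat * (a / lamsq) ^ α * ((1 + β) * L) ^ γ := step1
    _ = CMat * (1 + β) ^ γ * a / Ctil ^ α := step2
    _ ≤ CMat * (1 + β) ^ γ * a / ((2 + β) ^ γ * (6 * CMat)) := step3
    _ ≤ a / 6 := step4


section helper2

variable {X : Type*} {k : X → X → ℝ}

lemma postStd_nonneg {n : ℕ} (xs : Fin n → X) (x : X) : 0 ≤ postStd k xs x := by
  haveI : Nonempty {l : ℝ // 0 < l} := ⟨⟨1, one_pos⟩⟩
  exact le_ciInf fun l => Real.sqrt_nonneg _

lemma postStd_le {n : ℕ} (xs : Fin n → X) (x : X) {lam : ℝ} (hlam : 0 < lam) :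
    postStd k xs x ≤ Real.sqrt (postVar k xs lam x) := by
  have := ciInf_le (f := fun l : {l : ℝ // 0 < l} => Real.sqrt (postVar k xs l.1 x))
    ⟨0, by rintro _ ⟨l, rfl⟩; exact Real.sqrt_nonneg _⟩ ⟨lam, hlam⟩
  exact this

lemma sInf_le_postStd {T : ℕ} (xs : Fin T → X) (t : Fin T) :
    sInf (Set.range fun t : Fin T => postStd k (pre xs t) (xs t)) ≤
      postStd k (pre xs t) (xs t) :=
  csInf_le ⟨0, by rintro _ ⟨s, rfl⟩; exact postStd_nonneg _ _⟩ (Set.mem_range_self t)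

lemma min_le_one (hsym : ∀ x y : X, k x y = k y x)
    (hpsd : ∀ (n : ℕ) (xv : Fin n → X) (c : Fin n → ℝ),
      0 ≤ ∑ i, ∑ j, c i * c j * k (xv i) (xv j))
    (hk1 : ∀ x : X, k x x ≤ 1)
    {T : ℕ} (hT : 0 < T) (xs : Fin T → X) :
    sInf (Set.range fun t : Fin T => postStd k (pre xs t) (xs t)) ≤ 1 := by
  refine le_trans (sInf_le_postStd xs ⟨0, hT⟩) ?_
  refine le_trans (postStd_le _ _ one_pos) ?_
  refine Real.sqrt_le_one.mpr ?_
  exact le_trans (postVar_le_diag hsym hpsd _ one_ne_zero _) (hk1 _)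

lemma exists_small (hsym : ∀ x y : X, k x y = k y x)
    (hpsd : ∀ (n : ℕ) (xv : Fin n → X) (c : Fin n → ℝ),
      0 ≤ ∑ i, ∑ j, c i * c j * k (xv i) (xv j))
    {T : ℕ} (hT : 0 < T) (xs : Fin T → X) {lam : ℝ} (hlam : 0 < lam)
    (hsum : Real.log ((1 + (lam ^ 2)⁻¹ • gram k xs).det) ≤ T * Real.log 2) :
    ∃ t : Fin T, postVar k (pre xs t) lam (xs t) ≤ lam ^ 2 := by
  haveI : Nonempty (Fin T) := Fin.pos_iff_nonempty.mp hT
  have hl2 : (0:ℝ) < lam ^ 2 := by positivity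
  have hfac : ∀ t : Fin T, 0 < lam ^ 2 + postVar k (pre xs t) lam (xs t) :=
    fun t => postVar_add_pos hsym hpsd (pre xs t) hlam.ne' (xs t)
  have hprod := det_prod hsym hpsd hlam.ne' T xs
  have hsm : (lam ^ 2) • (1 + (lam ^ 2)⁻¹ • gram k xs)
      = gram k xs + lam ^ 2 • (1 : Matrix (Fin T) (Fin T) ℝ) := by
    rw [smul_add, smul_smul, mul_inv_cancel₀ hl2.ne', one_smul]
    exact add_comm _ _
  have hdet : (lam ^ 2) ^ T * (1 + (lam ^ 2)⁻¹ • gram k xs).det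
      = ∏ t : Fin T, (lam ^ 2 + postVar k (pre xs t) lam (xs t)) := by
    rw [← hprod, ← hsm, Matrix.det_smul, Fintype.card_fin]
  have hdetpos : 0 < (1 + (lam ^ 2)⁻¹ • gram k xs).det := by
    have hp : 0 < ∏ t : Fin T, (lam ^ 2 + postVar k (pre xs t) lam (xs t)) :=
      Finset.prod_pos fun t _ => hfac t
    nlinarith [pow_pos hl2 T]
  have hlogdet : Real.log ((1 + (lam ^ 2)⁻¹ • gram k xs).det)
      = (∑ t : Fin T, Real.log (lam ^ 2 + postVar k (pre xs t) lam (xs t)))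
        - T * Real.log (lam ^ 2) := by
    have h := congrArg Real.log hdet
    rw [Real.log_mul (by positivity) hdetpos.ne', Real.log_pow,
      Real.log_prod (fun t _ => (hfac t).ne')] at h
    push_cast at h ⊢
    linarith
  have hgsum : ∑ _t : Fin T, (Real.log 2 + Real.log (lam ^ 2))
      = T * Real.log 2 + T * Real.log (lam ^ 2) := by
    rw [Finset.sum_const, Finset.card_univ, Fintype.card_fin, nsmul_eq_mul]
    ring
  have hsums : ∑ t : Fin T, Real.log (lam ^ 2 + postVar k (pre xs t) lam (xs t))
      ≤ ∑ _t : Fin T, (Real.log 2 + Real.log (lam ^ 2)) := by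
    rw [hgsum]
    linarith [hlogdet ▸ hsum]
  obtain ⟨t, _, ht⟩ := Finset.exists_le_of_sum_le Finset.univ_nonempty hsums
  refine ⟨t, ?_⟩
  have ht2 : Real.log (lam ^ 2 + postVar k (pre xs t) lam (xs t))
      ≤ Real.log (2 * lam ^ 2) := by
    rw [Real.log_mul two_ne_zero hl2.ne']
    exact ht
  have := Real.exp_le_exp.mpr ht2
  rw [Real.exp_log (hfac t), Real.exp_log (by positivity)] at this
  linarith

end helper2

/-- Minimum posterior standard deviation under a Matérn-type information-gain bound. -/
theorem min_postStd_matern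
{X : Type*} [Nonempty X] (k : X → X → ℝ)
    (hsym : ∀ x y : X, k x y = k y x)
    (hpsd : ∀ (n : ℕ) (xv : Fin n → X) (c : Fin n → ℝ),
      0 ≤ ∑ i, ∑ j, c i * c j * k (xv i) (xv j))
    (hk1 : ∀ x : X, k x x ≤ 1)
    (CMat lamBar : ℝ) (hCMat : 0 < CMat) (hlamBar : 0 < lamBar)
    (T0 : ℕ) (hT0 : 2 ≤ T0) (d : ℕ) (hd : 1 ≤ d) (ν : ℝ) (hν : 0 < ν)
    (hgain : ∀ lam : ℝ, 0 < lam → lam ≤ lamBar → ∀ t : ℕ, T0 ≤ t →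
      mig k t lam ≤ ENNReal.ofReal
        (CMat * ((t : ℝ) / lam ^ 2) ^ ((d : ℝ) / (2 * ν + (d : ℝ))) *
          Real.log ((t : ℝ) / lam ^ 2) ^ (2 * ν / (2 * ν + (d : ℝ)))))
    (Ctil : ℝ) (hCtil : Ctil = max 1
      ((2 + 2 * ν / (d : ℝ)) ^ (2 * ν / (d : ℝ)) * (6 * CMat) ^ (1 + 2 * ν / (d : ℝ))))
    (Tlam : ℕ) (hTlam : ∀ t : ℕ, Tlam ≤ t →
      Ctil * (t : ℝ) ^ (-(2 * ν / (d : ℝ))) * Real.log (t : ℝ) ^ (2 * ν / (d : ℝ)) ≤ lamBar ^ 2)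
    (TMat : ℕ) (hTMat : TMat = max 4 (max T0 Tlam)) :
    (∀ T : ℕ, TMat ≤ T → ∀ xs : Fin T → X,
        sInf (Set.range fun t : Fin T => postStd k (pre xs t) (xs t)) ≤
          Real.sqrt Ctil * (T : ℝ) ^ (-(ν / (d : ℝ))) *
            Real.log (T : ℝ) ^ (ν / (d : ℝ))) ∧
      ∀ T : ℕ, 0 < T → ∀ xs : Fin T → X,
        sInf (Set.range fun t : Fin T => postStd k (pre xs t) (xs t)) ≤ 1 := by
  refine ⟨?_, fun T hT xs => min_le_one hsym hpsd hk1 hT xs⟩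
  intro T hTge xs
  rw [hTMat] at hTge
  have hT4 : 4 ≤ T := le_trans (le_max_left _ _) hTge
  have hTT0 : T0 ≤ T := le_trans (le_trans (le_max_left _ _) (le_max_right 4 _)) hTge
  have hTTlam : Tlam ≤ T := le_trans (le_trans (le_max_right _ _) (le_max_right 4 _)) hTge
  have hT0' : 0 < T := by omega
  have hCtil1 : 1 ≤ Ctil := hCtil ▸ le_max_left _ _
  have hCtil2 : (2 + 2 * ν / (d : ℝ)) ^ (2 * ν / (d : ℝ)) *
      (6 * CMat) ^ (1 + 2 * ν / (d : ℝ)) ≤ Ctil := hCtil ▸ le_max_right _ _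
  have hCtil0 : (0:ℝ) < Ctil := lt_of_lt_of_le one_pos hCtil1
  have haT1 : (1:ℝ) < (T:ℝ) := by exact_mod_cast (by omega : 1 < T)
  have haT0 : (0:ℝ) < (T:ℝ) := by linarith
  have hlogT : 0 < Real.log (T:ℝ) := Real.log_pos haT1
  set lamsq : ℝ := Ctil * (T:ℝ) ^ (-(2 * ν / (d : ℝ))) * Real.log (T:ℝ) ^ (2 * ν / (d : ℝ))
    with hlamsq
  have hlamsq_pos : 0 < lamsq := by rw [hlamsq]; positivity
  have hRHS : Real.sqrt Ctil * (T : ℝ) ^ (-(ν / (d : ℝ))) * Real.log (T : ℝ) ^ (ν / (d : ℝ))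
      = Real.sqrt lamsq := by
    have h1 : Real.sqrt ((T:ℝ) ^ (-(2 * ν / (d : ℝ)))) = (T:ℝ) ^ (-(ν / (d : ℝ))) := by
      rw [Real.sqrt_eq_rpow, ← Real.rpow_mul haT0.le]
      congr 1; ring
    have h2 : Real.sqrt (Real.log (T:ℝ) ^ (2 * ν / (d : ℝ))) = Real.log (T:ℝ) ^ (ν / (d : ℝ)) := by
      rw [Real.sqrt_eq_rpow, ← Real.rpow_mul hlogT.le]
      congr 1; ring
    rw [hlamsq, Real.sqrt_mul (by positivity), Real.sqrt_mul hCtil0.le, h1, h2]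
  rw [hRHS]
  set lam : ℝ := Real.sqrt lamsq with hlamdef
  have hlampos : 0 < lam := Real.sqrt_pos.mpr hlamsq_pos
  have hlam2 : lam ^ 2 = lamsq := Real.sq_sqrt hlamsq_pos.le
  by_cases hcase : 1 < lamsq
  · have hge1 : (1:ℝ) ≤ lam := by
      rw [hlamdef, show (1:ℝ) = Real.sqrt 1 by simp]
      exact Real.sqrt_le_sqrt hcase.le
    exact le_trans (min_le_one hsym hpsd hk1 hT0' xs) hge1
  · push_neg at hcase
    have hlamle : lam ≤ lamBar := by
      have h := hTlam T hTTlam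
      rw [hlamdef]
      calc Real.sqrt lamsq ≤ Real.sqrt (lamBar ^ 2) := Real.sqrt_le_sqrt h
        _ = lamBar := Real.sqrt_sq hlamBar.le
    have hmig := hgain lam hlampos hlamle T hTT0
    have hsb := scalar_bound CMat ν d hd hCMat hν Ctil hCtil1 hCtil2 T hT4 lamsq hlamsq hcase
    have hup : ENNReal.ofReal ((1/2) * Real.log ((1 + (lam ^ 2)⁻¹ • gram k xs).det))
        ≤ mig k T lam :=
      le_iSup (fun ys : Fin T → X =>
        ENNReal.ofReal ((1/2) * Real.log ((1 + (lam ^ 2)⁻¹ • gram k ys).det))) xs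
    have hchain : ENNReal.ofReal ((1/2) * Real.log ((1 + (lam ^ 2)⁻¹ • gram k xs).det))
        ≤ ENNReal.ofReal ((T:ℝ)/6) := by
      refine le_trans hup (le_trans hmig (ENNReal.ofReal_le_ofReal ?_))
      rw [hlam2]
      exact hsb
    have hld : (1/2) * Real.log ((1 + (lam ^ 2)⁻¹ • gram k xs).det) ≤ (T:ℝ)/6 :=
      (ENNReal.ofReal_le_ofReal_iff (by positivity)).mp hchain
    have hlog2 : (1:ℝ)/3 < Real.log 2 := by
      have := Real.log_two_gt_d9; linarith
    have hsum : Real.log ((1 + (lam ^ 2)⁻¹ • gram k xs).det) ≤ T * Real.log 2 := by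
      nlinarith
    obtain ⟨t, ht⟩ := exists_small hsym hpsd hT0' xs hlampos hsum
    calc sInf (Set.range fun t : Fin T => postStd k (pre xs t) (xs t))
        ≤ postStd k (pre xs t) (xs t) := sInf_le_postStd xs t
      _ ≤ Real.sqrt (postVar k (pre xs t) lam (xs t)) := postStd_le _ _ hlampos
      _ ≤ Real.sqrt (lam ^ 2) := Real.sqrt_le_sqrt ht
      _ = lam := Real.sqrt_sq hlampos.le
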